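/- Let I be a 0-dimensional ideal in K[x_1,...,x_n], L an extension field of K, and a ∈ K[x_1,...,x_n]/I. Under the canonical K-algebra homomorphism φ : K[x_1,...,x_n]/I → L[x_1,...,x_n]/I·L[x_1,...,x_n], the minimal polynomial of a over K equals the minimal polynomial of φ(a) over L. -/

import Mathlib

open TensorProduct Polynomial

set_option maxHeartbeats 1000000
set_option synthInstance.maxHeartbeats 200000

/-- Base change along a field extension preserves linear independence. -/
theorem linearIndependent_one_tmul {K L M ι : Type*} [Field K] [Field L] [Algebra K L]
    [AddCommGroup M] [Module K M] {v : ι → M} (hv : LinearIndependent K v) :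
    LinearIndependent L (fun i : ι => (1 : L) ⊗ₜ[K] v i) := by
  have hs : LinearIndepOn K id (Set.range v) := (linearIndepOn_id_range_iff hv.injective).mpr hv
  let B := Module.Basis.extend hs
  have hB : ∀ i : ι, B ⟨v i, hs.subset_extend _ ⟨i, rfl⟩⟩ = v i := fun i =>
    Module.Basis.extend_apply_self hs _
  let BL := Algebra.TensorProduct.basis L B
  have hinj : Function.Injective
      (fun i : ι => (⟨v i, hs.subset_extend _ ⟨i, rfl⟩⟩ : hs.extend (Set.subset_univ _))) := by
    intro i j hij
    exact hv.injective (by simpa using congrArg Subtype.val hij)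
  have := BL.linearIndependent.comp _ hinj
  convert this using 1
  funext i
  simp only [Function.comp_apply, BL, Algebra.TensorProduct.basis_apply, hB]

/-- The quotient by the extended ideal maps `L`-linearly to the base-changed quotient,
compatibly with the canonical map `φ`. -/
theorem exists_linearMap_toTensor {K L : Type*} [Field K] [Field L] [Algebra K L]
    {n : ℕ} (I : Ideal (MvPolynomial (Fin n) K)) :
    ∃ ψ : (MvPolynomial (Fin n) L ⧸ I.map (MvPolynomial.map (algebraMap K L))) →ₗ[L]
        L ⊗[K] (MvPolynomial (Fin n) K ⧸ I),
      ∀ x : MvPolynomial (Fin n) K ⧸ I,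
        ψ (Ideal.quotientMap (I.map (MvPolynomial.map (algebraMap K L)))
            (MvPolynomial.map (algebraMap K L)) Ideal.le_comap_map x) = (1 : L) ⊗ₜ[K] x := by
  classical
  let g : MvPolynomial (Fin n) L →ₐ[L] L ⊗[K] (MvPolynomial (Fin n) K ⧸ I) :=
    MvPolynomial.aeval (fun i => (1 : L) ⊗ₜ[K] (Ideal.Quotient.mk I (MvPolynomial.X i)))
  have hgf : ∀ p : MvPolynomial (Fin n) K,
      g (MvPolynomial.map (algebraMap K L) p) = (1 : L) ⊗ₜ[K] (Ideal.Quotient.mk I p) := by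
    intro p
    induction p using MvPolynomial.induction_on with
    | C c =>
        have h2 : g (MvPolynomial.map (algebraMap K L) (MvPolynomial.C c))
            = (algebraMap K L c) ⊗ₜ[K] (1 : MvPolynomial (Fin n) K ⧸ I) := by
          simp [g, MvPolynomial.algebraMap_eq, Algebra.TensorProduct.algebraMap_apply]
        have h3 : (Ideal.Quotient.mk I) (MvPolynomial.C c)
            = c • (1 : MvPolynomial (Fin n) K ⧸ I) := by
          rw [show (Ideal.Quotient.mk I) (MvPolynomial.C c)
              = algebraMap K (MvPolynomial (Fin n) K ⧸ I) c from rfl,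
            Algebra.algebraMap_eq_smul_one]
        rw [h2, h3, ← TensorProduct.smul_tmul, Algebra.algebraMap_eq_smul_one]
    | add p q hp hq =>
        simp only [map_add, hp, hq, TensorProduct.tmul_add]
    | mul_X p i hp =>
        have e1 : MvPolynomial.map (algebraMap K L) (p * MvPolynomial.X i)
            = MvPolynomial.map (algebraMap K L) p * MvPolynomial.X i := by
          simp
        rw [e1, map_mul g, hp]
        have h2 : g (MvPolynomial.X i)
            = (1 : L) ⊗ₜ[K] (Ideal.Quotient.mk I (MvPolynomial.X i)) := by
          simp [g]
        rw [h2, Algebra.TensorProduct.tmul_mul_tmul, one_mul, ← map_mul]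
  have hJ : ∀ q ∈ I.map (MvPolynomial.map (algebraMap K L)), g q = 0 := by
    have hle : I.map (MvPolynomial.map (algebraMap K L))
        ≤ RingHom.ker (g.toRingHom : MvPolynomial (Fin n) L →+* L ⊗[K] (MvPolynomial (Fin n) K ⧸ I)) := by
      rw [Ideal.map_le_iff_le_comap]
      intro h hh
      simp only [Ideal.mem_comap, RingHom.mem_ker]
      show g (MvPolynomial.map (algebraMap K L) h) = 0
      rw [hgf, Ideal.Quotient.eq_zero_iff_mem.mpr hh, TensorProduct.tmul_zero]
    exact fun q hq => hle hq
  refine ⟨(Ideal.Quotient.liftₐ _ g hJ).toLinearMap, fun x => ?_⟩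
  obtain ⟨p, rfl⟩ := Ideal.Quotient.mk_surjective x
  rw [Ideal.quotientMap_mk]
  show Ideal.Quotient.liftₐ _ g hJ (Ideal.Quotient.mk _ (MvPolynomial.map (algebraMap K L) p)) = _
  rw [Ideal.Quotient.liftₐ_apply]
  exact hgf p

/-- Let `I` be a 0-dimensional ideal in `K[x_1,...,x_n]` (i.e. the quotient is a
finite-dimensional `K`-vector space), `L` a field extension of `K`, and
`a ∈ K[x_1,...,x_n]/I`. Under the canonical homomorphism
`φ : K[x_1,...,x_n]/I → L[x_1,...,x_n]/I·L[x_1,...,x_n]`, the minimal polynomial of `a`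
over `K` equals the minimal polynomial of `φ(a)` over `L`. -/
theorem minpoly_eq_minpoly_of_baseChange {K L : Type*} [Field K] [Field L] [Algebra K L]
    {n : ℕ} (I : Ideal (MvPolynomial (Fin n) K))
    (hfin : FiniteDimensional K (MvPolynomial (Fin n) K ⧸ I))
    (a : MvPolynomial (Fin n) K ⧸ I) :
    (minpoly K a).map (algebraMap K L) =
      minpoly L
        (Ideal.quotientMap (I.map (MvPolynomial.map (algebraMap K L)))
          (MvPolynomial.map (algebraMap K L)) Ideal.le_comap_map a) := by
  classical
  set J : Ideal (MvPolynomial (Fin n) L) := I.map (MvPolynomial.map (algebraMap K L)) with hJdef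
  set φ : (MvPolynomial (Fin n) K ⧸ I) →+* (MvPolynomial (Fin n) L ⧸ J) :=
    Ideal.quotientMap J (MvPolynomial.map (algebraMap K L)) Ideal.le_comap_map with hφ
  obtain ⟨ψ, hψφ⟩ := exists_linearMap_toTensor (L := L) I
  -- integrality
  have ha : IsIntegral K a := IsIntegral.of_finite K a
  have hpmonic : (minpoly K a).Monic := minpoly.monic ha
  set p : K[X] := minpoly K a with hpdef
  set d : ℕ := p.natDegree with hd
  -- φ a is a root of p.map
  have haφ : Polynomial.aeval (φ a) (p.map (algebraMap K L)) = 0 := by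
    have h1 : Polynomial.aeval (φ a) (p.map (algebraMap K L))
        = Polynomial.eval₂ ((algebraMap L (MvPolynomial (Fin n) L ⧸ J)).comp (algebraMap K L))
            (φ a) p := by
      rw [Polynomial.aeval_def, Polynomial.eval₂_map]
    have h2 : φ (Polynomial.aeval a p)
        = Polynomial.eval₂ (φ.comp (algebraMap K (MvPolynomial (Fin n) K ⧸ I))) (φ a) p := by
      rw [Polynomial.aeval_def, Polynomial.hom_eval₂]
    have h3 : (algebraMap L (MvPolynomial (Fin n) L ⧸ J)).comp (algebraMap K L)
        = φ.comp (algebraMap K (MvPolynomial (Fin n) K ⧸ I)) := by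
      ext c
      show algebraMap L _ (algebraMap K L c) = φ (Ideal.Quotient.mk I (MvPolynomial.C c))
      rw [hφ, Ideal.quotientMap_mk, MvPolynomial.map_C]
      rfl
    rw [h1, h3, ← h2, minpoly.aeval, map_zero]
  have hint : IsIntegral L (φ a) := ⟨p.map (algebraMap K L), hpmonic.map _, by
    rwa [Polynomial.aeval_def] at haφ⟩
  set q : L[X] := minpoly L (φ a) with hq
  have hqmonic : q.Monic := minpoly.monic hint
  have hqdvd : q ∣ p.map (algebraMap K L) := minpoly.dvd L _ haφ
  -- linear independence of powers of φ a
  have lk : LinearIndependent K (fun i : Fin d => a ^ (i : ℕ)) := linearIndependent_pow a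
  have lt : LinearIndependent L (fun i : Fin d => (1 : L) ⊗ₜ[K] (a ^ (i : ℕ))) :=
    linearIndependent_one_tmul lk
  have li : LinearIndependent L (fun i : Fin d => (φ a) ^ (i : ℕ)) := by
    apply LinearIndependent.of_comp ψ
    convert lt using 1
    funext i
    simp only [Function.comp_apply, ← map_pow, hψφ]
    exact hψφ _
  -- degree comparison
  have hdle : d ≤ q.natDegree := by
    by_contra hlt
    push_neg at hlt
    have hsum : Polynomial.aeval (φ a) q
        = ∑ i ∈ Finset.range d, q.coeff i • (φ a) ^ i :=
      Polynomial.aeval_eq_sum_range' hlt (φ a)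
    have hzero : ∑ i : Fin d, q.coeff i • (φ a) ^ (i : ℕ) = 0 := by
      rw [Fin.sum_univ_eq_sum_range (fun i => q.coeff i • (φ a) ^ i), ← hsum, minpoly.aeval]
    have hcoeff := Fintype.linearIndependent_iff.mp li (fun i => q.coeff i) hzero
    have hne : q.coeff q.natDegree ≠ 0 := by
      rw [← Polynomial.leadingCoeff, hqmonic.leadingCoeff]
      exact one_ne_zero
    exact hne (hcoeff ⟨q.natDegree, hlt⟩)
  have hdge : q.natDegree ≤ d := by
    have hmapne : p.map (algebraMap K L) ≠ 0 := (hpmonic.map _).ne_zero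
    calc q.natDegree ≤ (p.map (algebraMap K L)).natDegree :=
          Polynomial.natDegree_le_of_dvd hqdvd hmapne
      _ = d := by rw [Polynomial.natDegree_map]
  -- conclude
  obtain ⟨c, hc⟩ := hqdvd
  have hcmonic : c.Monic := by
    have := hpmonic.map (algebraMap K L)
    rw [hc] at this
    exact hqmonic.of_mul_monic_left this
  have hcdeg : c.natDegree = 0 := by
    have : (p.map (algebraMap K L)).natDegree = q.natDegree + c.natDegree :=
      hc ▸ Polynomial.natDegree_mul hqmonic.ne_zero hcmonic.ne_zero
    rw [Polynomial.natDegree_map] at this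
    omega
  rw [hc, Polynomial.eq_one_of_monic_natDegree_zero hcmonic hcdeg, mul_one]
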